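/- Let V : [0,∞) → (0,∞) be continuous, μ : [0,∞) → [0,∞) continuous and bounded, f : [0,∞) → ℝ continuous, and C : [0,∞) → (0,∞) continuous with C(t) → C̃ as t → ∞ for some C̃ > 0. Define Θ(a) = ∫₀^a du/V(u) and h(t) = ∫₀^t C(s) ds, and let h⁻¹ : [0,∞) → [0,∞) denote the inverse of h (which is a strictly increasing bijection of [0,∞) onto itself). Then for every a ≥ 0, as t → ∞, the quantity (V(0)/V(a)) · f(C(h⁻¹(h(t) − Θ(a)))) · exp(−∫₀^a [μ(v)/V(v)] · [1/C(h⁻¹(h(t) + Θ(v) − Θ(a)))] dv) converges to (V(0)/V(a)) · f(C̃) · exp(−(1/C̃)·∫₀^a μ(v)/V(v) dv). -/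

import Mathlib

open Filter

/-- Pointwise long-time convergence of the characteristic representation of the solution:
with `Θ(a) = ∫₀^a du/V(u)`, `h(t) = ∫₀^t C(s) ds` and `h⁻¹` the inverse of the strictly
increasing bijection `h : [0,∞) → [0,∞)`, for every `a ≥ 0`,
`(V(0)/V(a)) f(C(h⁻¹(h(t) − Θ(a)))) exp(−∫₀^a (μ(v)/V(v)) / C(h⁻¹(h(t) + Θ(v) − Θ(a))) dv)`
converges, as `t → ∞`, to `(V(0)/V(a)) f(C̃) exp(−(1/C̃)∫₀^a μ(v)/V(v) dv)`. -/
theorem stmt15 (V μ f C : ℝ → ℝ) (Ctilde : ℝ) (hCtilde : 0 < Ctilde)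
    (hVcont : ContinuousOn V (Set.Ici 0)) (hVpos : ∀ a, 0 ≤ a → 0 < V a)
    (hμcont : ContinuousOn μ (Set.Ici 0)) (hμnn : ∀ a, 0 ≤ a → 0 ≤ μ a)
    (hμbdd : ∃ Mb : ℝ, ∀ a, 0 ≤ a → μ a ≤ Mb)
    (hfcont : ContinuousOn f (Set.Ici 0))
    (hCcont : ContinuousOn C (Set.Ici 0)) (hCpos : ∀ t, 0 ≤ t → 0 < C t)
    (hClim : Tendsto C atTop (nhds Ctilde))
    (Θ h hinv : ℝ → ℝ)
    (hΘ : ∀ a, Θ a = ∫ u in (0:ℝ)..a, 1 / V u)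
    (hh : ∀ t, h t = ∫ s in (0:ℝ)..t, C s)
    (hmono : StrictMonoOn h (Set.Ici 0))
    (hinv_left : ∀ t, 0 ≤ t → hinv (h t) = t)
    (hinv_right : ∀ y, 0 ≤ y → 0 ≤ hinv y ∧ h (hinv y) = y) :
    ∀ a, 0 ≤ a →
      Tendsto (fun t =>
        (V 0 / V a) * f (C (hinv (h t - Θ a))) *
          Real.exp (-(∫ v in (0:ℝ)..a, (μ v / V v) * (1 / C (hinv (h t + Θ v - Θ a))))))
        atTop
        (nhds ((V 0 / V a) * f Ctilde *
          Real.exp (-(1 / Ctilde) * ∫ v in (0:ℝ)..a, μ v / V v))) := by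
  -- basic positivity/continuity facts
  have hVinv_cont : ContinuousOn (fun u => 1 / V u) (Set.Ici 0) :=
    continuousOn_const.div hVcont (fun x hx => (hVpos x hx).ne')
  have hμV_cont : ContinuousOn (fun v => μ v / V v) (Set.Ici 0) :=
    hμcont.div hVcont (fun x hx => (hVpos x hx).ne')
  have huIcc_sub : ∀ x y : ℝ, 0 ≤ x → 0 ≤ y → Set.uIcc x y ⊆ Set.Ici 0 := by
    intro x y hx hy u hu
    exact le_trans (le_min hx hy) hu.1
  have hVII : ∀ x y : ℝ, 0 ≤ x → 0 ≤ y →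
      IntervalIntegrable (fun u => 1 / V u) MeasureTheory.volume x y := by
    intro x y hx hy
    exact (hVinv_cont.mono (huIcc_sub x y hx hy)).intervalIntegrable
  -- Θ is monotone and nonnegative on [0,∞)
  have hΘmono : ∀ x y : ℝ, 0 ≤ x → x ≤ y → Θ x ≤ Θ y := by
    intro x y hx hxy
    have hy : (0:ℝ) ≤ y := hx.trans hxy
    have hadd : (∫ u in (0:ℝ)..x, 1 / V u) + (∫ u in x..y, 1 / V u)
        = ∫ u in (0:ℝ)..y, 1 / V u :=
      intervalIntegral.integral_add_adjacent_intervals (hVII 0 x le_rfl hx) (hVII x y hx hy)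
    have hnn : (0:ℝ) ≤ ∫ u in x..y, 1 / V u := by
      apply intervalIntegral.integral_nonneg hxy
      intro u hu
      have hu0 : (0:ℝ) ≤ u := hx.trans hu.1
      exact div_nonneg zero_le_one (hVpos u hu0).le
    rw [hΘ x, hΘ y]
    linarith
  have hΘ0 : ∀ x : ℝ, 0 ≤ x → 0 ≤ Θ x := by
    intro x hx
    have : Θ 0 = 0 := by rw [hΘ 0, intervalIntegral.integral_same]
    linarith [hΘmono 0 x le_rfl hx]
  -- h tends to infinity
  have hmonoOn : MonotoneOn h (Set.Ici 0) := hmono.monotoneOn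
  have h_top : Tendsto h atTop atTop := by
    rw [tendsto_atTop]
    intro M
    obtain ⟨hM0, hMeq⟩ := hinv_right (max M 0) (le_max_right _ _)
    filter_upwards [eventually_ge_atTop (hinv (max M 0))] with t ht
    have ht0 : (0:ℝ) ≤ t := hM0.trans ht
    have := hmonoOn hM0 ht0 ht
    rw [hMeq] at this
    exact le_trans (le_max_left M 0) this
  -- hinv tends to infinity, and is monotone on [0,∞)
  have hinv_top : Tendsto hinv atTop atTop := by
    rw [tendsto_atTop]
    intro M
    filter_upwards [eventually_ge_atTop (max (h (max M 0)) 0)] with y hy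
    have hy0 : (0:ℝ) ≤ y := le_trans (le_max_right _ _) hy
    obtain ⟨h0, e⟩ := hinv_right y hy0
    have hM0 : (0:ℝ) ≤ max M 0 := le_max_right _ _
    have hle : h (max M 0) ≤ h (hinv y) := by
      rw [e]; exact le_trans (le_max_left _ _) hy
    have : max M 0 ≤ hinv y := by
      by_contra hc
      push_neg at hc
      exact absurd (hmono h0 hM0 hc) (by simpa using hle)
    exact le_trans (le_max_left M 0) this
  have hinvmono : ∀ y1 y2 : ℝ, 0 ≤ y1 → y1 ≤ y2 → hinv y1 ≤ hinv y2 := by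
    intro y1 y2 hy1 h12
    obtain ⟨a1, e1⟩ := hinv_right y1 hy1
    obtain ⟨a2, e2⟩ := hinv_right y2 (hy1.trans h12)
    by_contra hc
    push_neg at hc
    have := hmono a2 a1 hc
    rw [e1, e2] at this
    exact absurd h12 (not_le.mpr this)
  intro a ha
  -- Part A : convergence of the boundary term
  have hA0 : Tendsto (fun t => h t - Θ a) atTop atTop := by
    simpa [sub_eq_add_neg] using tendsto_atTop_add_const_right atTop (-Θ a) h_top
  have hA1 : Tendsto (fun t => hinv (h t - Θ a)) atTop atTop := hinv_top.comp hA0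
  have hA2 : Tendsto (fun t => C (hinv (h t - Θ a))) atTop (nhds Ctilde) := hClim.comp hA1
  have hmem : ∀ᶠ t in atTop, C (hinv (h t - Θ a)) ∈ Set.Ici (0:ℝ) := by
    filter_upwards [hA1.eventually (eventually_ge_atTop (0:ℝ))] with t ht
    exact (hCpos _ ht).le
  have hA : Tendsto (fun t => f (C (hinv (h t - Θ a)))) atTop (nhds (f Ctilde)) := by
    have hfC : ContinuousWithinAt f (Set.Ici 0) Ctilde := hfcont Ctilde hCtilde.le
    exact hfC.tendsto.comp (tendsto_nhdsWithin_iff.2 ⟨hA2, hmem⟩)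
  -- integrability of μ/V on [0,a]
  have hI1 : IntervalIntegrable (fun v => μ v / V v) MeasureTheory.volume 0 a :=
    (hμV_cont.mono (huIcc_sub 0 a le_rfl ha)).intervalIntegrable
  set K : ℝ := ∫ v in (0:ℝ)..a, μ v / V v with hKdef
  have hK0 : 0 ≤ K := by
    apply intervalIntegral.integral_nonneg ha
    intro u hu
    exact div_nonneg (hμnn u hu.1) (hVpos u hu.1).le
  -- globally continuous positive extension of C
  set Cg : ℝ → ℝ := fun x => C (max x 0) with hCgdef
  have hCg_cont : Continuous Cg :=
    hCcont.comp_continuous (continuous_id.max continuous_const) (fun x => Set.mem_Ici.mpr (le_max_right _ _))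
  have hCg_pos : ∀ x, 0 < Cg x := fun x => hCpos _ (le_max_right _ _)
  have hCg_inv_cont : Continuous (fun x => 1 / Cg x) :=
    continuous_const.div hCg_cont (fun x => (hCg_pos x).ne')
  -- Part B : convergence of the integral term
  have hB : Tendsto (fun t => ∫ v in (0:ℝ)..a,
      (μ v / V v) * (1 / C (hinv (h t + Θ v - Θ a)))) atTop (nhds ((1 / Ctilde) * K)) := by
    rw [Metric.tendsto_atTop]
    intro ε hε
    set ε' : ℝ := ε / (K + 1) with hε'def
    have hε' : 0 < ε' := div_pos hε (by linarith)
    have h1C : Tendsto (fun s => 1 / C s) atTop (nhds (1 / Ctilde)) :=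
      tendsto_const_nhds.div hClim hCtilde.ne'
    obtain ⟨S₀, hS₀⟩ := Metric.tendsto_atTop.1 h1C ε' hε'
    set S : ℝ := max S₀ 0 with hSdef
    have hcond : ∀ᶠ t in atTop, Θ a ≤ h t ∧ S ≤ hinv (h t - Θ a) := by
      filter_upwards [h_top.eventually (eventually_ge_atTop (Θ a)),
        hA1.eventually (eventually_ge_atTop S)] with t h1 h2
      exact ⟨h1, h2⟩
    obtain ⟨N, hN⟩ := eventually_atTop.1 hcond
    refine ⟨N, fun t ht => ?_⟩
    obtain ⟨hta, htS⟩ := hN t ht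
    -- pointwise facts on [0,a]
    have hargnn : ∀ v ∈ Set.Icc (0:ℝ) a, (0:ℝ) ≤ h t + Θ v - Θ a := by
      intro v hv
      have := hΘ0 v hv.1
      linarith
    have hmS : ∀ v ∈ Set.Icc (0:ℝ) a, S ≤ hinv (h t + Θ v - Θ a) := by
      intro v hv
      refine le_trans htS (hinvmono _ _ (by linarith) ?_)
      have := hΘ0 v hv.1
      linarith
    have hm0 : ∀ v ∈ Set.Icc (0:ℝ) a, (0:ℝ) ≤ hinv (h t + Θ v - Θ a) := by
      intro v hv
      exact le_trans (le_max_right S₀ 0) (hmS v hv)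
    have hbnd : ∀ v ∈ Set.Icc (0:ℝ) a,
        |1 / C (hinv (h t + Θ v - Θ a)) - 1 / Ctilde| ≤ ε' := by
      intro v hv
      have := hS₀ _ (le_trans (le_max_left S₀ 0) (hmS v hv))
      rw [Real.dist_eq] at this
      exact this.le
    -- measurable bounded version of the inner factor
    set ψ : ℝ → ℝ := fun v => 1 / Cg (hinv (h t + Θ v - Θ a)) with hψdef
    have hψeq : ∀ v ∈ Set.Icc (0:ℝ) a, ψ v = 1 / C (hinv (h t + Θ v - Θ a)) := by
      intro v hv
      simp only [hψdef, hCgdef, max_eq_left (hm0 v hv)]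
    have hm_mono : MonotoneOn (fun v => hinv (h t + Θ v - Θ a)) (Set.Icc (0:ℝ) a) := by
      intro v1 hv1 v2 hv2 h12
      refine hinvmono _ _ (hargnn v1 hv1) ?_
      have := hΘmono v1 v2 hv1.1 h12
      linarith
    have hψm : AEMeasurable ψ
        (MeasureTheory.volume.restrict (Set.Icc (0:ℝ) a)) := by
      have h1 := aemeasurable_restrict_of_monotoneOn (μ := MeasureTheory.volume) measurableSet_Icc hm_mono
      exact hCg_inv_cont.measurable.comp_aemeasurable' h1
    have hψbdd : ∀ᵐ v ∂(MeasureTheory.volume.restrict (Set.Icc (0:ℝ) a)),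
        ‖ψ v‖ ≤ 1 / Ctilde + ε' := by
      rw [MeasureTheory.ae_restrict_iff' measurableSet_Icc]
      apply MeasureTheory.ae_of_all
      intro v hv
      have h1 : |ψ v - 1 / Ctilde| ≤ ε' := by rw [hψeq v hv]; exact hbnd v hv
      have h2 : (0:ℝ) < 1 / Ctilde := by positivity
      rw [Real.norm_eq_abs]
      calc |ψ v| = |(ψ v - 1 / Ctilde) + 1 / Ctilde| := by ring_nf
        _ ≤ |ψ v - 1 / Ctilde| + |1 / Ctilde| := abs_add_le _ _
        _ ≤ ε' + (1 / Ctilde) := by rw [abs_of_pos h2]; linarith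
        _ = 1 / Ctilde + ε' := by ring
    have hIμV_Icc : MeasureTheory.IntegrableOn (fun v => μ v / V v)
        (Set.Icc (0:ℝ) a) MeasureTheory.volume :=
      (intervalIntegrable_iff_integrableOn_Icc_of_le ha).1 hI1
    have htmp : MeasureTheory.IntegrableOn (fun v => ψ v * (μ v / V v))
        (Set.Icc (0:ℝ) a) MeasureTheory.volume :=
      MeasureTheory.Integrable.bdd_mul hIμV_Icc hψm.aestronglyMeasurable hψbdd
    have hφint : MeasureTheory.IntegrableOn (fun v => (μ v / V v) * ψ v)
        (Set.Icc (0:ℝ) a) MeasureTheory.volume :=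
      htmp.congr (Filter.Eventually.of_forall fun v => mul_comm _ _)
    have hφII : IntervalIntegrable (fun v => (μ v / V v) * ψ v) MeasureTheory.volume 0 a :=
      (intervalIntegrable_iff_integrableOn_Icc_of_le ha).2 hφint
    -- rewrite the integral using ψ
    have horig : (∫ v in (0:ℝ)..a, (μ v / V v) * (1 / C (hinv (h t + Θ v - Θ a))))
        = ∫ v in (0:ℝ)..a, (μ v / V v) * ψ v := by
      apply intervalIntegral.integral_congr
      intro v hv
      rw [Set.uIcc_of_le ha] at hv
      show μ v / V v * (1 / C (hinv (h t + Θ v - Θ a))) = μ v / V v * ψ v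
      rw [hψeq v hv]
    have hI2 : IntervalIntegrable (fun v => μ v / V v * (1 / Ctilde))
        MeasureTheory.volume 0 a := hI1.mul_const _
    have hconst : (1 / Ctilde) * K = ∫ v in (0:ℝ)..a, (μ v / V v) * (1 / Ctilde) := by
      rw [intervalIntegral.integral_mul_const]
      ring
    rw [Real.dist_eq, horig]
    have hptwise : ∀ v ∈ Set.Icc (0:ℝ) a,
        |(μ v / V v) * ψ v - μ v / V v * (1 / Ctilde)| ≤ ε' * (μ v / V v) := by
      intro v hv
      have hnn : (0:ℝ) ≤ μ v / V v := div_nonneg (hμnn v hv.1) (hVpos v hv.1).le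
      have h1 : |ψ v - 1 / Ctilde| ≤ ε' := by rw [hψeq v hv]; exact hbnd v hv
      calc |(μ v / V v) * ψ v - μ v / V v * (1 / Ctilde)|
          = (μ v / V v) * |ψ v - 1 / Ctilde| := by
            rw [← mul_sub, abs_mul, abs_of_nonneg hnn]
        _ ≤ (μ v / V v) * ε' := mul_le_mul_of_nonneg_left h1 hnn
        _ = ε' * (μ v / V v) := mul_comm _ _
    have key : |(∫ v in (0:ℝ)..a, (μ v / V v) * ψ v) - (1 / Ctilde) * K| ≤ ε' * K := by
      calc |(∫ v in (0:ℝ)..a, (μ v / V v) * ψ v) - (1 / Ctilde) * K|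
          = |∫ v in (0:ℝ)..a, ((μ v / V v) * ψ v - μ v / V v * (1 / Ctilde))| := by
            rw [hconst, ← intervalIntegral.integral_sub hφII hI2]
        _ ≤ ∫ v in (0:ℝ)..a, |(μ v / V v) * ψ v - μ v / V v * (1 / Ctilde)| :=
            intervalIntegral.abs_integral_le_integral_abs ha
        _ ≤ ∫ v in (0:ℝ)..a, ε' * (μ v / V v) := by
            apply intervalIntegral.integral_mono_on ha ((hφII.sub hI2).abs)
              (hI1.const_mul ε') hptwise
        _ = ε' * K := by rw [intervalIntegral.integral_const_mul]
    have : ε' * K < ε := by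
      have h1 : ε' * K < ε' * (K + 1) := by nlinarith
      have h2 : ε' * (K + 1) = ε := by
        rw [hε'def]; field_simp
      linarith
    exact lt_of_le_of_lt key this
  -- assemble
  have hExp : Tendsto (fun t => Real.exp (-(∫ v in (0:ℝ)..a,
      (μ v / V v) * (1 / C (hinv (h t + Θ v - Θ a)))))) atTop
      (nhds (Real.exp (-((1 / Ctilde) * K)))) :=
    (Real.continuous_exp.tendsto _).comp hB.neg
  have final := (hA.const_mul (V 0 / V a)).mul hExp
  rw [neg_mul]
  exact final
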